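/- Let σ be a feasible solution of the reduced EVSP instance that maximizes the number of served customers and that, among all such maximizers, minimizes the number of served dummy customers. If at least one dummy customer is served by σ, then every item customer is served by σ. -/

import Mathlib

open Finset

/-- A bin packing of the `n` items with sizes `ℓ` : a collection `P` of bins (finsets of items)
such that every bin is nonempty, the total size of each bin is at most `1`, and every item
belongs to exactly one bin (i.e. `P` is a partition of `Fin n`). -/
def IsBinPacking (n : ℕ) (ℓ : Fin n → ℝ) (P : Finset (Finset (Fin n))) : Prop :=
  (∀ p ∈ P, p.Nonempty) ∧ (∀ p ∈ P, ∑ i ∈ p, ℓ i ≤ 1) ∧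
  (∀ i : Fin n, ∃! p : Finset (Fin n), p ∈ P ∧ i ∈ p)

/-- The optimal number of bins for the bin packing problem. -/
noncomputable def optBPP (n : ℕ) (ℓ : Fin n → ℝ) : ℕ :=
  sInf {k : ℕ | ∃ P : Finset (Finset (Fin n)), IsBinPacking n ℓ P ∧ P.card = k}

/-- A feasible solution of the reduced EVSP instance: customers are `Fin n ⊕ Fin n`
(`Sum.inl i` is item customer `i`, `Sum.inr j` is dummy customer `j`); `σ c = some v` means
customer `c` is served by vehicle `v`, `σ c = none` means `c` is unserved.
(i) each vehicle's item customers have total energy at most `1` (the battery capacity);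
(ii) a vehicle serving a dummy customer serves no other customer. -/
def Feasible (n : ℕ) (ℓ : Fin n → ℝ) (σ : Fin n ⊕ Fin n → Option (Fin n)) : Prop :=
  (∀ v : Fin n, ∑ i ∈ Finset.univ.filter (fun i : Fin n => σ (Sum.inl i) = some v), ℓ i ≤ 1) ∧
  (∀ v j : Fin n, σ (Sum.inr j) = some v →
    ∀ c : Fin n ⊕ Fin n, c ≠ Sum.inr j → σ c ≠ some v)

/-- The number of customers served by `σ`. -/
def servedCount (n : ℕ) (σ : Fin n ⊕ Fin n → Option (Fin n)) : ℕ :=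
  (Finset.univ.filter (fun c : Fin n ⊕ Fin n => σ c ≠ none)).card

/-- The number of dummy customers served by `σ`. -/
def dummyServed (n : ℕ) (σ : Fin n ⊕ Fin n → Option (Fin n)) : ℕ :=
  (Finset.univ.filter (fun j : Fin n => σ (Sum.inr j) ≠ none)).card

/-- The set of vehicles that serve at least one item customer under `σ`. -/
def itemVehicles (n : ℕ) (σ : Fin n ⊕ Fin n → Option (Fin n)) : Finset (Fin n) :=
  Finset.univ.filter (fun v : Fin n => ∃ i : Fin n, σ (Sum.inl i) = some v)

/-- Let `σ` be a feasible solution maximizing the number of served customers and, among all such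
maximizers, minimizing the number of served dummy customers.  If at least one dummy customer is
served, then every item customer is served. -/
theorem stmt_5 (n : ℕ) (hn : 1 ≤ n) (ℓ : Fin n → ℝ)
    (hℓ : ∀ i : Fin n, 0 < ℓ i ∧ ℓ i ≤ 1)
    (σ : Fin n ⊕ Fin n → Option (Fin n)) (hσ : Feasible n ℓ σ)
    (hmax : ∀ τ : Fin n ⊕ Fin n → Option (Fin n), Feasible n ℓ τ →
      servedCount n τ ≤ servedCount n σ)
    (hmin : ∀ τ : Fin n ⊕ Fin n → Option (Fin n), Feasible n ℓ τ →
      (∀ ρ : Fin n ⊕ Fin n → Option (Fin n), Feasible n ℓ ρ →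
        servedCount n ρ ≤ servedCount n τ) →
      dummyServed n σ ≤ dummyServed n τ)
    (hdummy : ∃ j : Fin n, σ (Sum.inr j) ≠ none) :
    ∀ i : Fin n, σ (Sum.inl i) ≠ none := by
  intro i₀ hi₀
  obtain ⟨j₀, hj₀⟩ := hdummy
  obtain ⟨v, hv⟩ : ∃ v, σ (Sum.inr j₀) = some v := by
    cases h : σ (Sum.inr j₀) with
    | none => exact absurd h hj₀
    | some v => exact ⟨v, rfl⟩
  have hi₀' : σ (Sum.inl i₀) = none := hi₀
  set τ : Fin n ⊕ Fin n → Option (Fin n) := fun c =>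
    if c = Sum.inr j₀ then none else if c = Sum.inl i₀ then some v else σ c with hτ
  have hτj₀ : τ (Sum.inr j₀) = none := by simp [hτ]
  have hτi₀ : τ (Sum.inl i₀) = some v := by simp [hτ]
  have hτinr : ∀ j, j ≠ j₀ → τ (Sum.inr j) = σ (Sum.inr j) := by
    intro j hj; simp [hτ, Sum.inr.injEq, hj]
  have hτinl : ∀ i, i ≠ i₀ → τ (Sum.inl i) = σ (Sum.inl i) := by
    intro i hi; simp [hτ, Sum.inl.injEq, hi]
  -- feasibility of τ
  have hfeas : Feasible n ℓ τ := by
    constructor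
    · intro w
      by_cases hw : w = v
      · rw [hw]
        have hset : Finset.univ.filter (fun i : Fin n => τ (Sum.inl i) = some v) = {i₀} := by
          ext i
          simp only [Finset.mem_filter, Finset.mem_univ, true_and, Finset.mem_singleton]
          constructor
          · intro h
            by_contra hi
            rw [hτinl i hi] at h
            exact hσ.2 v j₀ hv (Sum.inl i) (by simp) h
          · rintro rfl; exact hτi₀
        rw [hset, Finset.sum_singleton]
        exact (hℓ i₀).2
      · have hset : Finset.univ.filter (fun i : Fin n => τ (Sum.inl i) = some w)
            = Finset.univ.filter (fun i : Fin n => σ (Sum.inl i) = some w) := by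
          ext i
          simp only [Finset.mem_filter, Finset.mem_univ, true_and]
          by_cases hi : i = i₀
          · subst hi
            simp [hτi₀, hi₀', Ne.symm hw, hw, Option.some.injEq]
          · rw [hτinl i hi]
        rw [hset]
        exact hσ.1 w
    · intro w j hj c hc
      have hjj₀ : j ≠ j₀ := by
        rintro rfl; rw [hτj₀] at hj; exact nomatch hj
      rw [hτinr j hjj₀] at hj
      have hwv : w ≠ v := by
        rintro rfl
        exact hσ.2 w j₀ hv (Sum.inr j) (by simp [hjj₀]) hj
      by_cases h1 : c = Sum.inr j₀
      · subst h1; rw [hτj₀]; exact fun h => nomatch h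
      · by_cases h2 : c = Sum.inl i₀
        · subst h2; rw [hτi₀]
          simp [Option.some.injEq, Ne.symm hwv]
        · have : τ c = σ c := by simp [hτ, h1, h2]
          rw [this]
          exact hσ.2 w j hj c hc
  -- served counts equal
  have hserved : servedCount n τ = servedCount n σ := by
    have hset : Finset.univ.filter (fun c : Fin n ⊕ Fin n => τ c ≠ none)
        = insert (Sum.inl i₀)
            ((Finset.univ.filter (fun c : Fin n ⊕ Fin n => σ c ≠ none)).erase (Sum.inr j₀)) := by
      ext c
      simp only [Finset.mem_filter, Finset.mem_univ, true_and, Finset.mem_insert,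
        Finset.mem_erase]
      by_cases h1 : c = Sum.inr j₀
      · subst h1; simp [hτj₀, hj₀]
      · by_cases h2 : c = Sum.inl i₀
        · subst h2; simp [hτi₀]
        · have : τ c = σ c := by simp [hτ, h1, h2]
          simp [this, h1, h2]
    have hnotmem : (Sum.inl i₀ : Fin n ⊕ Fin n) ∉
        (Finset.univ.filter (fun c : Fin n ⊕ Fin n => σ c ≠ none)).erase (Sum.inr j₀) := by
      simp [hi₀']
    have hmem : (Sum.inr j₀ : Fin n ⊕ Fin n) ∈
        Finset.univ.filter (fun c : Fin n ⊕ Fin n => σ c ≠ none) := by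
      simp [hj₀]
    rw [servedCount, hset, Finset.card_insert_of_notMem hnotmem,
      Finset.card_erase_of_mem hmem, servedCount]
    have : 1 ≤ (Finset.univ.filter (fun c : Fin n ⊕ Fin n => σ c ≠ none)).card :=
      Finset.card_pos.mpr ⟨Sum.inr j₀, hmem⟩
    omega
  -- dummy count drops
  have hdum : dummyServed n τ < dummyServed n σ := by
    have hset : Finset.univ.filter (fun j : Fin n => τ (Sum.inr j) ≠ none)
        = (Finset.univ.filter (fun j : Fin n => σ (Sum.inr j) ≠ none)).erase j₀ := by
      ext j
      simp only [Finset.mem_filter, Finset.mem_univ, true_and, Finset.mem_erase]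
      by_cases hj : j = j₀
      · subst hj; simp [hτj₀]
      · rw [hτinr j hj]; simp [hj]
    have hmem : j₀ ∈ Finset.univ.filter (fun j : Fin n => σ (Sum.inr j) ≠ none) := by
      simp [hj₀]
    rw [dummyServed, hset, dummyServed]
    exact Finset.card_erase_lt_of_mem hmem
  have := hmin τ hfeas (fun ρ hρ => (hmax ρ hρ).trans_eq hserved.symm)
  omega
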